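/- arXiv:2406.11225 — 2 statements merged into one kernel-verified Lean document; each statement's English description precedes it below -/
import Mathlib

section
/- Given an alignment P of strings x and y, the set of costly edges of P together with their (x,y)-annotations, and the string x, uniquely determine the string y. -/
/-- A single step in the edit-distance grid: horizontal, vertical, or diagonal. -/
def GridStep (p q : ℕ × ℕ) : Prop :=
  (q.1 = p.1 + 1 ∧ q.2 = p.2) ∨ (q.1 = p.1 ∧ q.2 = p.2 + 1) ∨
    (q.1 = p.1 + 1 ∧ q.2 = p.2 + 1)

/-- The list of (directed) edges of a path given as a list of vertices. -/
def pathEdges (P : List (ℕ × ℕ)) : List ((ℕ × ℕ) × (ℕ × ℕ)) := P.zip P.tail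

section Aux

lemma pathEdges_cons_cons (a b : ℕ × ℕ) (l : List (ℕ × ℕ)) :
    pathEdges (a :: b :: l) = (a, b) :: pathEdges (b :: l) := rfl

lemma mem_pathEdges_tail {a : ℕ × ℕ} {l : List (ℕ × ℕ)} {e : (ℕ × ℕ) × (ℕ × ℕ)}
    (h : e ∈ pathEdges l) : e ∈ pathEdges (a :: l) := by
  cases l with
  | nil => simp [pathEdges] at h
  | cons b t => rw [pathEdges_cons_cons]; exact List.mem_cons_of_mem _ h

lemma mem_pathEdges_suffix {l' l : List (ℕ × ℕ)} (h : l' <:+ l) {e : (ℕ × ℕ) × (ℕ × ℕ)}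
    (he : e ∈ pathEdges l') : e ∈ pathEdges l := by
  induction l with
  | nil => rw [List.suffix_nil.mp h] at he; exact he
  | cons a t ih =>
    rcases h with ⟨s, hs⟩
    cases s with
    | nil => simp at hs; rw [← hs]; exact he
    | cons c s' =>
      have hst : s' ++ l' = t := by injection hs
      exact mem_pathEdges_tail (ih ⟨s', hst⟩)

lemma fst_mem_of_edge {l : List (ℕ × ℕ)} {e : (ℕ × ℕ) × (ℕ × ℕ)}
    (h : e ∈ pathEdges l) : e.1 ∈ l := by
  obtain ⟨a, b⟩ := e
  exact (List.of_mem_zip h).1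

lemma snd_mem_of_edge {l : List (ℕ × ℕ)} {e : (ℕ × ℕ) × (ℕ × ℕ)}
    (h : e ∈ pathEdges l) : e.2 ∈ l := by
  obtain ⟨a, b⟩ := e
  exact List.mem_of_mem_tail (List.of_mem_zip h).2

lemma gridStep_of_edge : ∀ {l : List (ℕ × ℕ)}, l.Chain' GridStep →
    ∀ {e : (ℕ × ℕ) × (ℕ × ℕ)}, e ∈ pathEdges l → GridStep e.1 e.2 := by
  intro l
  induction l with
  | nil => intro _ e he; simp [pathEdges] at he
  | cons a t ih =>
    intro hc e he
    cases t with
    | nil => simp [pathEdges] at he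
    | cons b t' =>
      rw [pathEdges_cons_cons] at he
      rcases List.isChain_cons_cons.mp hc with ⟨hab, hc'⟩
      rcases List.mem_cons.mp he with h | h
      · rw [h]; exact hab
      · exact ih hc' h

lemma sum_head_le : ∀ {t : List (ℕ × ℕ)} {b : ℕ × ℕ}, (b :: t).Chain' GridStep →
    ∀ v ∈ b :: t, b.1 + b.2 ≤ v.1 + v.2 := by
  intro t
  induction t with
  | nil => intro b _ v hv; simp at hv; rw [hv]
  | cons c t' ih =>
    intro b hc v hv
    rcases List.isChain_cons_cons.mp hc with ⟨hbc, hc'⟩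
    rcases List.mem_cons.mp hv with h | h
    · rw [h]
    · have := ih hc' v h
      rcases hbc with ⟨h1, h2⟩ | ⟨h1, h2⟩ | ⟨h1, h2⟩ <;> omega

lemma out_unique : ∀ {l : List (ℕ × ℕ)}, l.Chain' GridStep →
    ∀ {v w w' : ℕ × ℕ}, (v, w) ∈ pathEdges l → (v, w') ∈ pathEdges l → w = w' := by
  intro l
  induction l with
  | nil => intro _ v w w' h; simp [pathEdges] at h
  | cons a t ih =>
    intro hc v w w' h1 h2
    cases t with
    | nil => simp [pathEdges] at h1
    | cons b t' =>
      rw [pathEdges_cons_cons] at h1 h2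
      rcases List.isChain_cons_cons.mp hc with ⟨hab, hc'⟩
      have hsum : a.1 + a.2 < b.1 + b.2 := by
        rcases hab with ⟨h1', h2'⟩ | ⟨h1', h2'⟩ | ⟨h1', h2'⟩ <;> omega
      rcases List.mem_cons.mp h1 with h1 | h1 <;> rcases List.mem_cons.mp h2 with h2 | h2
      · rw [Prod.mk.injEq] at h1 h2
        rw [h1.2, h2.2]
      · exfalso
        have hva : v = a := (Prod.mk.injEq .. ▸ h1).1
        have : v ∈ b :: t' := fst_mem_of_edge h2
        have := sum_head_le hc' v this
        rw [hva] at this; omega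
      · exfalso
        have hva : v = a := (Prod.mk.injEq .. ▸ h2).1
        have : v ∈ b :: t' := fst_mem_of_edge h1
        have := sum_head_le hc' v this
        rw [hva] at this; omega
      · exact ih hc' h1 h2

lemma le_last : ∀ {l : List (ℕ × ℕ)}, l.Chain' GridStep → ∀ {z : ℕ × ℕ},
    l.getLast? = some z → ∀ v ∈ l, v.1 ≤ z.1 ∧ v.2 ≤ z.2 := by
  intro l
  induction l with
  | nil => intro _ z hz; simp at hz
  | cons a t ih =>
    intro hc z hz v hv
    cases t with
    | nil =>
      simp at hz hv
      rw [hv, ← hz]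
      exact ⟨le_refl _, le_refl _⟩
    | cons c t' =>
      rw [List.getLast?_cons_cons] at hz
      rcases List.isChain_cons_cons.mp hc with ⟨hac, hc'⟩
      rcases List.mem_cons.mp hv with h | h
      · have hcz := ih hc' hz c (List.mem_cons_self)
        rw [h]
        rcases hac with ⟨h1, h2⟩ | ⟨h1, h2⟩ | ⟨h1, h2⟩ <;> omega
      · exact ih hc' hz v h

lemma last_no_out {l : List (ℕ × ℕ)} (hc : l.Chain' GridStep) {z w : ℕ × ℕ}
    (hz : l.getLast? = some z) (he : (z, w) ∈ pathEdges l) : False := by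
  have hg : GridStep z w := gridStep_of_edge hc he
  have hw : w ∈ l := snd_mem_of_edge he
  have := le_last hc hz w hw
  rcases hg with ⟨h1, h2⟩ | ⟨h1, h2⟩ | ⟨h1, h2⟩ <;> omega

lemma getLast?_of_suffix {l' l : List (ℕ × ℕ)} (h : l' <:+ l) (hne : l' ≠ []) :
    l.getLast? = l'.getLast? := by
  rcases h with ⟨s, rfl⟩
  rw [List.getLast?_append]
  cases hl : l'.getLast? with
  | none => exact absurd (List.getLast?_eq_none_iff.mp hl) hne
  | some z => rfl

lemma cross_exists : ∀ {l : List (ℕ × ℕ)}, l.Chain' GridStep → ∀ {a z : ℕ × ℕ},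
    l.head? = some a → l.getLast? = some z → ∀ j, a.2 ≤ j → j < z.2 →
    ∃ e ∈ pathEdges l, e.1.2 = j ∧ e.2.2 = j + 1 := by
  intro l
  induction l with
  | nil => intro _ a z ha; simp at ha
  | cons b t ih =>
    intro hc a z ha hz j hja hjz
    have hba : b = a := by simpa using ha
    subst hba
    cases t with
    | nil =>
      simp at hz
      subst hz
      omega
    | cons c t' =>
      rw [List.getLast?_cons_cons] at hz
      rcases List.isChain_cons_cons.mp hc with ⟨hbc, hc'⟩
      by_cases hcj : c.2 ≤ j
      · obtain ⟨e, he, h1, h2⟩ := ih hc' rfl hz j hcj hjz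
        exact ⟨e, mem_pathEdges_tail he, h1, h2⟩
      · refine ⟨(b, c), ?_, ?_, ?_⟩
        · rw [pathEdges_cons_cons]; exact List.mem_cons_self
        · show b.2 = j
          rcases hbc with ⟨h1, h2⟩ | ⟨h1, h2⟩ | ⟨h1, h2⟩ <;> omega
        · show c.2 = j + 1
          rcases hbc with ⟨h1, h2⟩ | ⟨h1, h2⟩ | ⟨h1, h2⟩ <;> omega

end Aux

/-- A spanning path (alignment) of `Grid(x,y)`. -/
def IsSpanningPath (m n : ℕ) (P : List (ℕ × ℕ)) : Prop :=
  P.head? = some (0, 0) ∧ P.getLast? = some (m, n) ∧ P.Chain' GridStep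

/-- For an edge `e = (i,j) → (i',j')`, `x_e = x_{i'}` if `i' = i+1` and `ε` (here `none`)
otherwise, and similarly `y_e`; `e` is costly iff `x_e ≠ y_e`. -/
def edgeLabelX {α : Type*} (x : List α) (e : (ℕ × ℕ) × (ℕ × ℕ)) : Option α :=
  if e.2.1 = e.1.1 + 1 then x[e.1.1]? else none

def edgeLabelY {α : Type*} (y : List α) (e : (ℕ × ℕ) × (ℕ × ℕ)) : Option α :=
  if e.2.2 = e.1.2 + 1 then y[e.1.2]? else none

def IsCostly {α : Type*} (x y : List α) (e : (ℕ × ℕ) × (ℕ × ℕ)) : Prop :=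
  edgeLabelX x e ≠ edgeLabelY y e

/-- The `(x,y)`-annotation of an edge `e` is the triple `(e, x_e, y_e)`. -/
def annot {α : Type*} (x y : List α) (e : (ℕ × ℕ) × (ℕ × ℕ)) :
    ((ℕ × ℕ) × (ℕ × ℕ)) × Option α × Option α :=
  (e, edgeLabelX x e, edgeLabelY y e)

section Aux2

lemma noncostly_diag {α : Type*} (x y : List α) {l : List (ℕ × ℕ)}
    (hc : l.Chain' GridStep) (hz : l.getLast? = some (x.length, y.length))
    {e : (ℕ × ℕ) × (ℕ × ℕ)} (he : e ∈ pathEdges l) (hnc : ¬ IsCostly x y e) :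
    (e.2.1 = e.1.1 + 1 ∧ e.2.2 = e.1.2 + 1) ∧ x[e.1.1]? = y[e.1.2]? := by
  have hg := gridStep_of_edge hc he
  have hb := le_last hc hz e.2 (snd_mem_of_edge he)
  have heq : edgeLabelX x e = edgeLabelY y e := not_ne_iff.mp hnc
  rcases hg with ⟨h1, h2⟩ | ⟨h1, h2⟩ | ⟨h1, h2⟩
  · exfalso
    have hx : e.1.1 < x.length := by
      have := hb.1; omega
    rw [edgeLabelX, if_pos h1, edgeLabelY, if_neg (by omega),
      List.getElem?_eq_getElem hx] at heq
    simp at heq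
  · exfalso
    have hy : e.1.2 < y.length := by
      have := hb.2; omega
    rw [edgeLabelY, if_pos h2, edgeLabelX, if_neg (by omega),
      List.getElem?_eq_getElem hy] at heq
    simp at heq
  · refine ⟨⟨h1, h2⟩, ?_⟩
    rwa [edgeLabelX, if_pos h1, edgeLabelY, if_pos h2] at heq

lemma path_eq (C : (ℕ × ℕ) × (ℕ × ℕ) → Prop) (m : ℕ) (P₀ Q₀ : List (ℕ × ℕ))
    (hP₀ : P₀.Chain' GridStep) (hQ₀ : Q₀.Chain' GridStep)
    (hPd : ∀ e ∈ pathEdges P₀, C e ∨ (e.2.1 = e.1.1 + 1 ∧ e.2.2 = e.1.2 + 1))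
    (hQd : ∀ e ∈ pathEdges Q₀, C e ∨ (e.2.1 = e.1.1 + 1 ∧ e.2.2 = e.1.2 + 1))
    (hCP : ∀ e, C e → e ∈ pathEdges P₀)
    (hCQ : ∀ e, C e → e ∈ pathEdges Q₀)
    (hPb : ∀ v ∈ P₀, v.1 ≤ m) (hQb : ∀ v ∈ Q₀, v.1 ≤ m)
    (hPl : ∀ z : ℕ × ℕ, P₀.getLast? = some z → z.1 = m)
    (hQl : ∀ z : ℕ × ℕ, Q₀.getLast? = some z → z.1 = m) :
    ∀ P : List (ℕ × ℕ), P <:+ P₀ → ∀ Q : List (ℕ × ℕ), Q <:+ Q₀ →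
      P ≠ [] → Q ≠ [] → P.head? = Q.head? → P = Q := by
  intro P
  induction P with
  | nil => intro _ Q _ hPne; exact absurd rfl hPne
  | cons v P' ih =>
    intro hPsuf Q hQsuf hPne hQne hhead
    cases Q with
    | nil => exact absurd rfl hQne
    | cons u Q' =>
      have hvu : v = u := by simpa using hhead
      subst hvu
      have hP'suf : P' <:+ P₀ := (List.suffix_cons v P').trans hPsuf
      have hQ'suf : Q' <:+ Q₀ := (List.suffix_cons v Q').trans hQsuf
      cases P' with
      | nil =>
        cases Q' with
        | nil => rfl
        | cons w Q'' =>
          exfalso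
          have hew : (v, w) ∈ pathEdges Q₀ :=
            mem_pathEdges_suffix hQsuf
              (by rw [pathEdges_cons_cons]; exact List.mem_cons_self)
          have hvlast : P₀.getLast? = some v := by
            rw [getLast?_of_suffix hPsuf hPne]; rfl
          rcases hQd _ hew with hcos | hdiag
          · exact last_no_out hP₀ hvlast (hCP _ hcos)
          · have hw : w ∈ Q₀ := snd_mem_of_edge hew
            have h1 : w.1 ≤ m := hQb w hw
            have h2 : v.1 = m := hPl v hvlast
            have h3 : w.1 = v.1 + 1 := hdiag.1
            omega
      | cons w P'' =>
        cases Q' with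
        | nil =>
          exfalso
          have hew : (v, w) ∈ pathEdges P₀ :=
            mem_pathEdges_suffix hPsuf
              (by rw [pathEdges_cons_cons]; exact List.mem_cons_self)
          have hvlast : Q₀.getLast? = some v := by
            rw [getLast?_of_suffix hQsuf hQne]; rfl
          rcases hPd _ hew with hcos | hdiag
          · exact last_no_out hQ₀ hvlast (hCQ _ hcos)
          · have hw : w ∈ P₀ := snd_mem_of_edge hew
            have h1 : w.1 ≤ m := hPb w hw
            have h2 : v.1 = m := hQl v hvlast
            have h3 : w.1 = v.1 + 1 := hdiag.1
            omega
        | cons u' Q'' =>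
          have heP : (v, w) ∈ pathEdges P₀ :=
            mem_pathEdges_suffix hPsuf
              (by rw [pathEdges_cons_cons]; exact List.mem_cons_self)
          have heQ : (v, u') ∈ pathEdges Q₀ :=
            mem_pathEdges_suffix hQsuf
              (by rw [pathEdges_cons_cons]; exact List.mem_cons_self)
          have hwu : w = u' := by
            rcases hPd _ heP with hcos | hdiagP
            · exact out_unique hQ₀ (hCQ _ hcos) heQ
            · rcases hQd _ heQ with hcos | hdiagQ
              · exact (out_unique hP₀ (hCP _ hcos) heP).symm
              · obtain ⟨hd1, hd2⟩ := hdiagP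
                obtain ⟨hd1', hd2'⟩ := hdiagQ
                exact Prod.ext (by simp_all) (by simp_all)
          subst hwu
          have := ih hP'suf (w :: Q'') hQ'suf (by simp) (by simp) rfl
          rw [this]

end Aux2

/-- The set of costly edges of an alignment, together with their `(x,y)`-annotations,
and the string `x`, uniquely determine the string `y`: if `P` is an alignment of `(x,y)`
and `Q` is an alignment of `(x,y')` with the same annotated costly edge set, then `y = y'`. -/
theorem string_determined_by_annotated_costly {α : Type*} (x y y' : List α)
    (P Q : List (ℕ × ℕ))
    (hP : IsSpanningPath x.length y.length P)
    (hQ : IsSpanningPath x.length y'.length Q)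
    (h : annot x y '' {e | e ∈ pathEdges P ∧ IsCostly x y e} =
         annot x y' '' {e | e ∈ pathEdges Q ∧ IsCostly x y' e}) :
    y = y' := by
  obtain ⟨hPh, hPz, hPc⟩ := hP
  obtain ⟨hQh, hQz, hQc⟩ := hQ
  have key : ∀ e, e ∈ pathEdges P → IsCostly x y e →
      (e ∈ pathEdges Q ∧ IsCostly x y' e) ∧ edgeLabelY y e = edgeLabelY y' e := by
    intro e he hc
    have hmem : annot x y e ∈ annot x y '' {e | e ∈ pathEdges P ∧ IsCostly x y e} :=
      ⟨e, ⟨he, hc⟩, rfl⟩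
    rw [h] at hmem
    obtain ⟨f, hf, hfe⟩ := hmem
    simp only [annot, Prod.mk.injEq] at hfe
    obtain ⟨hf1, -, hf3⟩ := hfe
    subst hf1
    exact ⟨⟨hf.1, hf.2⟩, hf3.symm⟩
  have key' : ∀ e, e ∈ pathEdges Q → IsCostly x y' e →
      e ∈ pathEdges P ∧ IsCostly x y e := by
    intro e he hc
    have hmem : annot x y' e ∈ annot x y' '' {e | e ∈ pathEdges Q ∧ IsCostly x y' e} :=
      ⟨e, ⟨he, hc⟩, rfl⟩
    rw [← h] at hmem
    obtain ⟨f, hf, hfe⟩ := hmem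
    simp only [annot, Prod.mk.injEq] at hfe
    obtain ⟨hf1, -, -⟩ := hfe
    subst hf1
    exact ⟨hf.1, hf.2⟩
  have hPQ : P = Q := by
    refine path_eq (fun e => e ∈ pathEdges P ∧ IsCostly x y e) x.length P Q hPc hQc
      ?_ ?_ ?_ ?_ ?_ ?_ ?_ ?_ P (List.suffix_refl P) Q (List.suffix_refl Q)
      ?_ ?_ (hPh.trans hQh.symm)
    · intro e he
      by_cases hc : IsCostly x y e
      · exact Or.inl ⟨he, hc⟩
      · exact Or.inr (noncostly_diag x y hPc hPz he hc).1
    · intro e he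
      by_cases hc : IsCostly x y' e
      · exact Or.inl (key' e he hc)
      · exact Or.inr (noncostly_diag x y' hQc hQz he hc).1
    · exact fun e hce => hce.1
    · exact fun e hce => (key e hce.1 hce.2).1.1
    · intro v hv; exact (le_last hPc hPz v hv).1
    · intro v hv; exact (le_last hQc hQz v hv).1
    · intro z hz
      have := Option.some.inj (hPz.symm.trans hz)
      rw [← this]
    · intro z hz
      have := Option.some.inj (hQz.symm.trans hz)
      rw [← this]
    · rintro rfl; simp at hPh
    · rintro rfl; simp at hQh
  have hlast : ((x.length, y.length) : ℕ × ℕ) = (x.length, y'.length) :=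
    Option.some.inj (hPz.symm.trans (by rw [hPQ]; exact hQz))
  have hlen : y.length = y'.length := congrArg Prod.snd hlast
  apply List.ext_getElem?
  intro j
  by_cases hj : j < y.length
  · obtain ⟨e, he, he1, he2⟩ := cross_exists hPc hPh hPz j (Nat.zero_le j) hj
    have heQ : e ∈ pathEdges Q := by rw [← hPQ]; exact he
    have hif : e.2.2 = e.1.2 + 1 := by omega
    by_cases hc : IsCostly x y e
    · have hl := (key e he hc).2
      rw [edgeLabelY, edgeLabelY, if_pos hif, if_pos hif, he1] at hl
      exact hl
    · have hc' : ¬ IsCostly x y' e := fun hcc => hc (key' e heQ hcc).2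
      have h1 := (noncostly_diag x y hPc hPz he hc).2
      have h2 := (noncostly_diag x y' hQc hQz heQ hc').2
      rw [he1] at h1 h2
      rw [← h1, h2]
  · rw [List.getElem?_eq_none (by omega), List.getElem?_eq_none (by omega)]
end

section
/- Fix a hash h : D → S and strings u,w ∈ Γ^D where Γ = F_p. For each j ∈ S with |h^{-1}(j) ∩ I_≠(u,w)| ≥ 2, the probability over a uniformly random α ∈ Γ that the filtering test passes — i.e., that Δ_{α,h}(u,w)_{j,value} ≠ 0, z_{j,index} < |D|, and Δ_{α,h}(u,w)_{j,hash} = α^{z_{j,index}}·(z_{j,x-val} − z_{j,y-val}) where z_j = restore(Δ_{α,h}(u,w)_j) — is at most (|D|−1)/|Γ|. -/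
open Finset

/-- The class of indices in `D = {0,…,n−1}` hashed by `h` to bucket `j`. -/
def hashClass {S : Type*} [DecidableEq S] (n : ℕ) (h : ℕ → S) (j : S) : Finset ℕ :=
  (Finset.range n).filter (fun i => h i = j)

/-- The `value` component of the superposition trace difference at bucket `j`. -/
def dVal {S : Type*} [DecidableEq S] (p n : ℕ) (h : ℕ → S) (u w : ℕ → ZMod p) (j : S) :
    ZMod p :=
  ∑ i ∈ hashClass n h j, (u i - w i)

/-- The `product` component of the superposition trace difference at bucket `j`. -/
def dProd {S : Type*} [DecidableEq S] (p n : ℕ) (h : ℕ → S) (u w : ℕ → ZMod p) (j : S) :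
    ZMod p :=
  ∑ i ∈ hashClass n h j, (i : ZMod p) * (u i - w i)

/-- The `square` component of the superposition trace difference at bucket `j`. -/
def dSq {S : Type*} [DecidableEq S] (p n : ℕ) (h : ℕ → S) (u w : ℕ → ZMod p) (j : S) :
    ZMod p :=
  ∑ i ∈ hashClass n h j, (u i ^ 2 - w i ^ 2)

/-- The `hash` component of the superposition trace difference at bucket `j`. -/
def dHash {S : Type*} [DecidableEq S] (p n : ℕ) (h : ℕ → S) (u w : ℕ → ZMod p)
    (α : ZMod p) (j : S) : ZMod p :=
  ∑ i ∈ hashClass n h j, α ^ i * (u i - w i)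

/-- The rebuilt index `z_{j,index}`. -/
noncomputable def zIndex {S : Type*} [DecidableEq S] (p n : ℕ) [Fact p.Prime]
    (h : ℕ → S) (u w : ℕ → ZMod p) (j : S) : ZMod p :=
  dProd p n h u w j / dVal p n h u w j

/-- The rebuilt value `z_{j,x-val}`. -/
noncomputable def zX {S : Type*} [DecidableEq S] (p n : ℕ) [Fact p.Prime]
    (h : ℕ → S) (u w : ℕ → ZMod p) (j : S) : ZMod p :=
  (dSq p n h u w j + dVal p n h u w j ^ 2) / (2 * dVal p n h u w j)

/-- The rebuilt value `z_{j,y-val}`. -/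
noncomputable def zY {S : Type*} [DecidableEq S] (p n : ℕ) [Fact p.Prime]
    (h : ℕ → S) (u w : ℕ → ZMod p) (j : S) : ZMod p :=
  (dSq p n h u w j - dVal p n h u w j ^ 2) / (2 * dVal p n h u w j)

/-- If the bucket `j` contains at least two mismatch indices of `(u,w)`, then the
probability over a uniformly random `α ∈ F_p` that the filtering test passes —
`Δ_value ≠ 0`, `z_index < |D|`, and `Δ_hash = α^{z_index}·(z_{x-val} − z_{y-val})` —
is at most `(|D|−1)/|Γ|`. -/
theorem filtering_test_probability {S : Type*} [DecidableEq S]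
    (p n : ℕ) [hp : Fact p.Prime] [NeZero p] (hp2 : p ≠ 2)
    (h : ℕ → S) (u w : ℕ → ZMod p) (j : S)
    (hmm : 2 ≤ ((Finset.range n).filter (fun i => u i ≠ w i ∧ h i = j)).card) :
    (({α : ZMod p |
        dVal p n h u w j ≠ 0 ∧
        (zIndex p n h u w j).val < n ∧
        dHash p n h u w α j =
          α ^ (zIndex p n h u w j).val * (zX p n h u w j - zY p n h u w j)}.ncard : ℚ) / p
      ≤ ((n : ℚ) - 1) / p) := by

  classical
  have hp0 : (0:ℚ) < p := by exact_mod_cast (NeZero.pos p)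
  have hn2 : 2 ≤ n := by
    have := (Finset.card_filter_le (Finset.range n) (fun i => u i ≠ w i ∧ h i = j))
    simpa using le_trans hmm (le_trans this (by simp))
  rw [div_le_div_iff_of_pos_right hp0]
  have hnn : (0:ℚ) ≤ (n:ℚ) - 1 := by
    have : (2:ℚ) ≤ n := by exact_mod_cast hn2
    linarith
  set k := (zIndex p n h u w j).val with hk
  set T : Set (ZMod p) := {α : ZMod p |
        dVal p n h u w j ≠ 0 ∧
        (zIndex p n h u w j).val < n ∧
        dHash p n h u w α j =
          α ^ (zIndex p n h u w j).val * (zX p n h u w j - zY p n h u w j)} with hT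
  by_cases hV : dVal p n h u w j = 0
  · have : T = ∅ := by ext α; simp [hT, hV]
    rw [this]; simpa using hnn
  by_cases hkn : k < n
  · -- main case
    have h2 : (2 : ZMod p) ≠ 0 := by
      intro h0
      have : (p:ℕ) ∣ 2 := by
        have : ((2:ℕ) : ZMod p) = 0 := by exact_mod_cast h0
        exact (ZMod.natCast_eq_zero_iff 2 p).mp this
      exact hp2 ((Nat.prime_dvd_prime_iff_eq hp.out Nat.prime_two).mp this)
    have hXY : zX p n h u w j - zY p n h u w j = dVal p n h u w j := by
      unfold zX zY
      rw [div_sub_div_same,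
        show dSq p n h u w j + dVal p n h u w j ^ 2 - (dSq p n h u w j - dVal p n h u w j ^ 2)
          = (2 * dVal p n h u w j) * dVal p n h u w j by ring,
        mul_div_cancel_left₀ _ (mul_ne_zero h2 hV)]
    -- the polynomial
    set P : Polynomial (ZMod p) :=
      (∑ i ∈ hashClass n h j, Polynomial.C (u i - w i) * Polynomial.X ^ i)
        - Polynomial.C (dVal p n h u w j) * Polynomial.X ^ k with hP
    have heval : ∀ α : ZMod p, P.eval α = dHash p n h u w α j - α ^ k * dVal p n h u w j := by
      intro α
      simp only [hP, Polynomial.eval_sub, Polynomial.eval_finset_sum, Polynomial.eval_mul,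
        Polynomial.eval_C, Polynomial.eval_pow, Polynomial.eval_X, dHash]
      congr 1
      · exact Finset.sum_congr rfl fun i _ => mul_comm _ _
      · exact mul_comm _ _
    -- mismatch set
    obtain ⟨a, ha, b, hb, hab⟩ := Finset.one_lt_card.mp (lt_of_lt_of_le one_lt_two hmm)
    have hmem : ∀ m ∈ (Finset.range n).filter (fun i => u i ≠ w i ∧ h i = j),
        m ∈ hashClass n h j ∧ u m ≠ w m := by
      intro m hm
      simp only [Finset.mem_filter, Finset.mem_range] at hm
      exact ⟨by simp [hashClass, hm.1, hm.2.2], hm.2.1⟩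
    obtain ⟨m, hmC, hmuw, hmk⟩ : ∃ m, m ∈ hashClass n h j ∧ u m ≠ w m ∧ m ≠ k := by
      by_cases hak : a = k
      · exact ⟨b, (hmem b hb).1, (hmem b hb).2, fun hbk => hab (hak.trans hbk.symm)⟩
      · exact ⟨a, (hmem a ha).1, (hmem a ha).2, hak⟩
    have hP0 : P ≠ 0 := by
      intro h0
      have hc : P.coeff m = 0 := by rw [h0]; simp
      rw [hP] at hc
      simp only [Polynomial.coeff_sub, Polynomial.finset_sum_coeff,
        Polynomial.coeff_C_mul, Polynomial.coeff_X_pow] at hc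
      simp only [mul_ite, mul_one, mul_zero, Finset.sum_ite_eq, if_pos hmC,
        if_neg hmk, mul_zero, sub_zero] at hc
      exact hmuw (sub_eq_zero.mp hc)
    have hdeg : P.natDegree ≤ n - 1 := by
      rw [hP]
      apply le_trans (Polynomial.natDegree_sub_le _ _)
      apply max_le
      · apply Polynomial.natDegree_sum_le_of_forall_le
        intro i hi
        refine le_trans (Polynomial.natDegree_C_mul_le _ _) ?_
        simp only [Polynomial.natDegree_X_pow]
        have : i < n := by
          simp only [hashClass, Finset.mem_filter, Finset.mem_range] at hi
          exact hi.1
        omega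
      · refine le_trans (Polynomial.natDegree_C_mul_le _ _) ?_
        simp only [Polynomial.natDegree_X_pow]
        omega
    have hTsub : T = ↑P.roots.toFinset := by
      ext α
      simp only [hT, Set.mem_setOf_eq, Finset.coe_sort_coe, Multiset.mem_toFinset,
        Finset.mem_coe, Polynomial.mem_roots, hP0, ne_eq, not_false_iff, true_and,
        Polynomial.IsRoot.def, heval, sub_eq_zero]
      constructor
      · rintro ⟨-, -, h3⟩; rw [h3, hXY]
      · intro h3; exact ⟨hV, hkn, by rw [h3, hXY]⟩
    rw [hTsub, Set.ncard_coe_finset]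
    have hcard : P.roots.toFinset.card ≤ n - 1 :=
      le_trans (Multiset.toFinset_card_le _) (le_trans (Polynomial.card_roots' P) hdeg)
    calc (P.roots.toFinset.card : ℚ) ≤ ((n - 1 : ℕ) : ℚ) := by exact_mod_cast hcard
      _ ≤ (n:ℚ) - 1 := by
          have : ((n - 1 : ℕ) : ℚ) = (n:ℚ) - 1 := by
            have : 1 ≤ n := by omega
            push_cast [this]; ring
          rw [this]
  · have : T = ∅ := by ext α; simp [hT]; intro _ h2; exact absurd h2 hkn
    rw [this]; simpa using hnn
end
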